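/- Let q : (K;φ) → (L;ψ) be a distal extension of topological dynamical systems and assume that (L;ψ) is minimal. Then q is an open map. -/

import Mathlib

/-- The `n`-th power (for `n : ℤ`) of a homeomorphism, as a map. -/
noncomputable def homeoZPow {K : Type*} [TopologicalSpace K] (φ : K ≃ₜ K) (n : ℤ) : K → K :=
  ⇑(φ.toEquiv ^ n : Equiv.Perm K)

section aux
variable {K : Type*} [TopologicalSpace K] (φ : K ≃ₜ K)

lemma homeoZPow_add (m n : ℤ) : homeoZPow φ (m + n) = homeoZPow φ m ∘ homeoZPow φ n := by
  ext x; simp [homeoZPow, zpow_add, Equiv.Perm.mul_apply]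

lemma homeoZPow_zero : homeoZPow φ 0 = id := by ext x; simp [homeoZPow]

lemma homeoZPow_one : homeoZPow φ 1 = ⇑φ := by ext x; simp [homeoZPow]

lemma homeoZPow_neg_one : homeoZPow φ (-1) = ⇑φ.symm := by
  ext x; simp [homeoZPow]

lemma homeoZPow_continuous (n : ℤ) : Continuous (homeoZPow φ n) := by
  induction n using Int.induction_on with
  | zero => rw [homeoZPow_zero]; exact continuous_id
  | succ n ih =>
      have h : homeoZPow φ (n + 1) = homeoZPow φ n ∘ homeoZPow φ 1 := by
        rw [← homeoZPow_add]
      rw [h, homeoZPow_one]; exact ih.comp φ.continuous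
  | pred n ih =>
      have h : homeoZPow φ (-n - 1) = homeoZPow φ (-n) ∘ homeoZPow φ (-1) := by
        rw [← homeoZPow_add]; ring_nf
      rw [h, homeoZPow_neg_one]; exact ih.comp φ.symm.continuous

end aux

/-- A distal extension `q : (K;φ) → (L;ψ)` of topological dynamical systems
with `(L;ψ)` minimal is an open map. -/
theorem distal_extension_isOpenMap
    {K L : Type*} [TopologicalSpace K] [CompactSpace K] [T2Space K] [Nonempty K]
    [TopologicalSpace L] [CompactSpace L] [T2Space L] [Nonempty L]
    (φ : K ≃ₜ K) (ψ : L ≃ₜ L) (q : K → L)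
    (hq_cont : Continuous q) (hq_surj : Function.Surjective q)
    (hq_comm : ∀ x, q (φ x) = ψ (q x))
    (hdistal : ∀ x y : K, q x = q y →
      (∃ z : K, (z, z) ∈
        closure {w : K × K | ∃ n : ℤ, w = (homeoZPow φ n x, homeoZPow φ n y)}) → x = y)
    (hmin : ∀ M : Set L, IsClosed M → ψ '' M = M → M = ∅ ∨ M = Set.univ) :
    IsOpenMap q := by
  -- commutation for inverse and powers
  have hq_comm' : ∀ x, q (φ.symm x) = ψ.symm (q x) := by
    intro x
    have := hq_comm (φ.symm x)
    rw [φ.apply_symm_apply] at this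
    rw [this, ψ.symm_apply_apply]
  have hq_pow : ∀ (n : ℤ) (x : K), q (homeoZPow φ n x) = homeoZPow ψ n (q x) := by
    intro n
    induction n using Int.induction_on with
    | zero => intro x; simp [homeoZPow_zero]
    | succ n ih =>
        intro x
        have h1 : homeoZPow φ ((n : ℤ) + 1) = homeoZPow φ 1 ∘ homeoZPow φ n := by
          rw [← homeoZPow_add]; ring_nf
        have h2 : homeoZPow ψ ((n : ℤ) + 1) = homeoZPow ψ 1 ∘ homeoZPow ψ n := by
          rw [← homeoZPow_add]; ring_nf
        rw [h1, h2]
        simp only [Function.comp_apply, homeoZPow_one]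
        rw [hq_comm, ih]
    | pred n ih =>
        intro x
        have h1 : homeoZPow φ (-(n : ℤ) - 1) = homeoZPow φ (-1) ∘ homeoZPow φ (-n) := by
          rw [← homeoZPow_add]; ring_nf
        have h2 : homeoZPow ψ (-(n : ℤ) - 1) = homeoZPow ψ (-1) ∘ homeoZPow ψ (-n) := by
          rw [← homeoZPow_add]; ring_nf
        rw [h1, h2]
        simp only [Function.comp_apply, homeoZPow_neg_one]
        rw [hq_comm', ih]
  -- The Ellis semigroup
  set P : Set (K → K) := {f | ∃ n : ℤ, f = homeoZPow φ n} with hP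
  set E : Set (K → K) := closure P with hE
  have hPE : P ⊆ E := subset_closure
  have hidE : id ∈ E := hPE ⟨0, (homeoZPow_zero φ).symm⟩
  have hEclosed : IsClosed E := isClosed_closure
  have hEcompact : IsCompact E := hEclosed.isCompact
  -- composition with a power on the left stays in E
  have hcomp_pow : ∀ (n : ℤ), ∀ t ∈ E, homeoZPow φ n ∘ t ∈ E := by
    intro n t ht
    have hc : Continuous (fun f : K → K => homeoZPow φ n ∘ f) := by
      apply continuous_pi
      intro x
      exact (homeoZPow_continuous φ n).comp (continuous_apply x)
    have himg : (fun f : K → K => homeoZPow φ n ∘ f) '' P ⊆ E := by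
      rintro _ ⟨f, ⟨m, rfl⟩, rfl⟩
      exact hPE ⟨n + m, by rw [homeoZPow_add]⟩
    have := image_closure_subset_closure_image (s := P) hc
    have h2 : (fun f : K → K => homeoZPow φ n ∘ f) t ∈ closure ((fun f : K → K => homeoZPow φ n ∘ f) '' P) :=
      this ⟨t, ht, rfl⟩
    exact closure_minimal himg hEclosed h2
  -- E is closed under composition
  have hEcomp : ∀ s ∈ E, ∀ t ∈ E, s ∘ t ∈ E := by
    intro s hs t ht
    have hc : Continuous (fun f : K → K => f ∘ t) := by
      apply continuous_pi
      intro x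
      exact continuous_apply (t x)
    have himg : (fun f : K → K => f ∘ t) '' P ⊆ E := by
      rintro _ ⟨f, ⟨m, rfl⟩, rfl⟩
      exact hcomp_pow m t ht
    have h2 : (fun f : K → K => f ∘ t) s ∈ closure ((fun f : K → K => f ∘ t) '' P) :=
      image_closure_subset_closure_image hc ⟨s, hs, rfl⟩
    exact closure_minimal himg hEclosed h2
  -- q is constant on images of fiber-pairs
  have hfiber_const : ∀ t ∈ E, ∀ a b : K, q a = q b → q (t a) = q (t b) := by
    intro t ht a b hab
    have hcl : IsClosed {f : K → K | q (f a) = q (f b)} :=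
      isClosed_eq (hq_cont.comp (continuous_apply a)) (hq_cont.comp (continuous_apply b))
    have hsub : P ⊆ {f : K → K | q (f a) = q (f b)} := by
      rintro _ ⟨n, rfl⟩
      simp only [Set.mem_setOf_eq, hq_pow, hab]
    exact closure_minimal hsub hcl ht
  -- distality via Ellis elements
  have hdistal' : ∀ t ∈ E, ∀ a b : K, q a = q b → t a = t b → a = b := by
    intro t ht a b hab htab
    apply hdistal a b hab
    refine ⟨t a, ?_⟩
    have hc : Continuous (fun f : K → K => ((f a, f b) : K × K)) :=
      (continuous_apply a).prodMk (continuous_apply b)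
    have himg : (fun f : K → K => ((f a, f b) : K × K)) '' P ⊆
        {w : K × K | ∃ n : ℤ, w = (homeoZPow φ n a, homeoZPow φ n b)} := by
      rintro _ ⟨f, ⟨m, rfl⟩, rfl⟩
      exact ⟨m, rfl⟩
    have h2 : ((t a, t b) : K × K) ∈
        closure ((fun f : K → K => ((f a, f b) : K × K)) '' P) :=
      image_closure_subset_closure_image hc ⟨t, ht, rfl⟩
    have h3 := (closure_mono himg) h2
    rw [htab] at h3 ⊢
    exact h3
  -- the key "fixing" lemma
  have hfix : ∀ w ∈ E, ∀ b : K, q (w b) = q b → w (w b) = w b → w b = b := by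
    intro w hw b h1 h2
    exact (hdistal' w hw b (w b) h1.symm h2.symm).symm
  -- minimality: every point of L is hit from a fixed x via E
  have hsurjE : ∀ x : K, ∀ l : L, ∃ t ∈ E, q (t x) = l := by
    intro x l
    set M : Set L := (fun t : K → K => q (t x)) '' E with hM
    have hMc : IsCompact M := hEcompact.image (hq_cont.comp (continuous_apply x))
    have hMne : M.Nonempty := ⟨q x, id, hidE, rfl⟩
    have hMinv : ψ '' M = M := by
      apply Set.Subset.antisymm
      · rintro _ ⟨_, ⟨t, ht, rfl⟩, rfl⟩
        refine ⟨⇑φ ∘ t, ?_, ?_⟩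
        · have := hcomp_pow 1 t ht; rwa [homeoZPow_one] at this
        · simp only [Function.comp_apply]; rw [hq_comm]
      · rintro _ ⟨t, ht, rfl⟩
        refine ⟨q ((⇑φ.symm ∘ t) x), ⟨⇑φ.symm ∘ t, ?_, rfl⟩, ?_⟩
        · have := hcomp_pow (-1) t ht; rwa [homeoZPow_neg_one] at this
        · simp only [Function.comp_apply]
          rw [hq_comm', ψ.apply_symm_apply]
    rcases hmin M hMc.isClosed hMinv with h | h
    · exact absurd (h ▸ hMne) (by simp)
    · have : l ∈ M := h ▸ Set.mem_univ l
      rcases this with ⟨t, ht, htl⟩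
      exact ⟨t, ht, htl⟩
  -- now the main argument
  intro U hU
  rw [isOpen_iff_mem_nhds]
  rintro l₀ ⟨x, hxU, rfl⟩
  by_contra hcon
  -- get an ultrafilter converging to q x containing the complement of q '' U
  have hmem : q x ∈ closure (q '' U)ᶜ := by
    rw [closure_compl]
    intro h
    exact hcon (mem_interior_iff_mem_nhds.mp h)
  have hcp : ClusterPt (q x) (Filter.principal (q '' U)ᶜ) := by
    rwa [mem_closure_iff_clusterPt] at hmem
  haveI := hcp.neBot
  obtain ⟨𝒰, h𝒰⟩ := Ultrafilter.exists_le (nhds (q x) ⊓ Filter.principal (q '' U)ᶜ)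
  have h𝒰nhds : (𝒰 : Filter L) ≤ nhds (q x) := h𝒰.trans inf_le_left
  have h𝒰compl : (q '' U)ᶜ ∈ 𝒰 := by
    have := h𝒰.trans inf_le_right
    exact this (Filter.mem_principal_self _)
  -- choose for each l an Ellis element sending x into the fiber of l
  choose s hsE hsl using fun l => hsurjE x l
  -- push 𝒰 forward and take a limit point p in E
  obtain ⟨p, -, hp⟩ := isCompact_univ.ultrafilter_le_nhds (𝒰.map s)
    (by simp [Filter.univ_mem])
  have hpE : p ∈ E := by
    have hmemE : E ∈ Ultrafilter.map s 𝒰 :=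
      Filter.mem_map.mpr (Filter.univ_mem' fun l => hsE l)
    have hle : ↑(Ultrafilter.map s 𝒰) ≤ nhds p ⊓ Filter.principal E :=
      le_inf hp (Filter.le_principal_iff.mpr hmemE)
    have hnb : (nhds p ⊓ Filter.principal E).NeBot := Filter.neBot_of_le hle
    rw [← hEclosed.closure_eq]
    exact mem_closure_iff_clusterPt.mpr hnb
  -- evaluation limits
  have heval : ∀ a : K, Filter.Tendsto (fun l => s l a) 𝒰 (nhds (p a)) := by
    intro a
    have : Filter.Tendsto (fun f : K → K => f a) (Ultrafilter.map s 𝒰) (nhds (p a)) :=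
      (continuous_apply a).continuousAt.tendsto.comp hp
    exact this
  -- q (p x) = q x
  have hpx : q (p x) = q x := by
    have h1 : Filter.Tendsto (fun l => q (s l x)) 𝒰 (nhds (q (p x))) :=
      (hq_cont.tendsto (p x)).comp (heval x)
    have h2 : Filter.Tendsto (fun l => q (s l x)) 𝒰 (nhds (q x)) := by
      have : (fun l : L => q (s l x)) = fun l => l := funext fun l => hsl l
      rw [this]
      exact h𝒰nhds
    exact tendsto_nhds_unique h1 h2
  -- the subsemigroup S of elements preserving the fiber of x
  set S : Set (K → K) := {t ∈ E | q (t x) = q x} with hS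
  have hScomp : ∀ a ∈ S, ∀ b ∈ S, a ∘ b ∈ S := by
    rintro a ⟨haE, hax⟩ b ⟨hbE, hbx⟩
    refine ⟨hEcomp a haE b hbE, ?_⟩
    have : q (a (b x)) = q (a x) := hfiber_const a haE (b x) x hbx
    simpa [Function.comp] using this.trans hax
  have hpS : p ∈ S := ⟨hpE, hpx⟩
  have hSclosed : IsClosed S := by
    apply IsClosed.inter hEclosed
    exact isClosed_eq (hq_cont.comp (continuous_apply x)) continuous_const
  have hScompact : IsCompact S := hSclosed.isCompact
  -- Sp = S ∘ p : compact subsemigroup; find idempotent u = s' ∘ p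
  set Sp : Set (K → K) := (fun f : K → K => f ∘ p) '' S with hSp
  have hSpcompact : IsCompact Sp := by
    apply hScompact.image
    apply continuous_pi
    intro a
    exact continuous_apply (p a)
  have hSpsub : Sp ⊆ S := by
    rintro _ ⟨f, hf, rfl⟩
    exact hScomp f hf p hpS
  have hSpcomp : ∀ a ∈ Sp, ∀ b ∈ Sp, a ∘ b ∈ Sp := by
    rintro _ ⟨f, hf, rfl⟩ _ ⟨g, hg, rfl⟩
    exact ⟨f ∘ p ∘ g, hScomp f hf (p ∘ g) (hScomp p hpS g hg), rfl⟩
  have hSpne : Sp.Nonempty := ⟨p ∘ p, p, hpS, rfl⟩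
  -- Ellis–Numakura
  letI : Mul (K → K) := ⟨fun f g => f ∘ g⟩
  letI : Semigroup (K → K) := ⟨fun _ _ _ => rfl⟩
  have hSpmul : ∀ a ∈ Sp, ∀ b ∈ Sp, a * b ∈ Sp := hSpcomp
  obtain ⟨u, huSp, huu⟩ := exists_idempotent_in_compact_subsemigroup
    (M := K → K)
    (fun r => by
      apply continuous_pi
      intro a
      show Continuous fun f : K → K => f (r a)
      exact continuous_apply (r a))
    Sp hSpne hSpcompact hSpmul
  obtain ⟨s', hs'S, rfl⟩ := huSp
  have huu' : (s' ∘ p) ∘ (s' ∘ p) = s' ∘ p := huu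
  -- u := s' ∘ p fixes the fiber of x pointwise
  have huS : s' ∘ p ∈ S := hSpsub ⟨s', hs'S, rfl⟩
  have hufix : ∀ b : K, q b = q x → (s' ∘ p) b = b := by
    intro b hb
    apply hfix (s' ∘ p) huS.1
    · have : q ((s' ∘ p) b) = q ((s' ∘ p) x) := hfiber_const (s' ∘ p) huS.1 b x hb
      rw [this, huS.2, hb]
    · exact congrFun huu' b
  -- v := p ∘ s' also fixes x
  have hs'x : q (s' x) = q x := hs'S.2
  have hvx : p (s' x) = x := by
    have hvE : p ∘ s' ∈ E := hEcomp p hpE s' hs'S.1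
    have hqv : q ((p ∘ s') x) = q x := by
      have : q (p (s' x)) = q (p x) := hfiber_const p hpE (s' x) x hs'x
      simpa [Function.comp] using this.trans hpx
    have hvv : (p ∘ s') ((p ∘ s') x) = (p ∘ s') x := by
      have h1 : (s' ∘ p) (s' x) = s' x := hufix (s' x) hs'x
      show p (s' (p (s' x))) = p (s' x)
      have : s' (p (s' x)) = s' x := h1
      rw [this]
    exact hfix (p ∘ s') hvE x hqv hvv
  -- conclude: q '' U ∈ 𝒰, contradiction
  have hqU : q '' U ∈ 𝒰 := by
    have htend : Filter.Tendsto (fun l => s l (s' x)) 𝒰 (nhds x) := by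
      have := heval (s' x)
      rwa [hvx] at this
    have hUmem : {l : L | s l (s' x) ∈ U} ∈ 𝒰 := htend (hU.mem_nhds hxU)
    filter_upwards [hUmem] with l hl
    refine ⟨s l (s' x), hl, ?_⟩
    have : q (s l (s' x)) = q (s l x) := hfiber_const (s l) (hsE l) (s' x) x hs'x
    rw [this, hsl l]
  exact (Ultrafilter.compl_mem_iff_notMem.mp h𝒰compl) hqU
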